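/- Inside SL₂(ℚ[t,t⁻¹]), one has the equality of subgroups SL₂(ℤ[t]) ∩ Γ(ℚ) = i₂(SL₂(ℤ[t])) ∩ Γ(ℚ), where SL₂(ℤ[t]) and Γ(ℚ) ⊆ SL₂(ℚ[t]) are viewed as subgroups of SL₂(ℚ[t,t⁻¹]) via the evident inclusions; moreover this common subgroup equals the set of matrices in SL₂(ℤ[t]) whose lower-left entry is divisible by t. -/

import Mathlib

open Matrix MatrixGroups Polynomial LaurentPolynomial

namespace Paper

variable (R : Type) [CommRing R]

lemma entry00 (A B : SL(2, R)) : (↑(A * B) : Matrix (Fin 2) (Fin 2) R) 0 0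
    = A.1 0 0 * B.1 0 0 + A.1 0 1 * B.1 1 0 := by
  simp [Matrix.SpecialLinearGroup.coe_mul, Matrix.mul_apply, Fin.sum_univ_two]

lemma entry01 (A B : SL(2, R)) : (↑(A * B) : Matrix (Fin 2) (Fin 2) R) 0 1
    = A.1 0 0 * B.1 0 1 + A.1 0 1 * B.1 1 1 := by
  simp [Matrix.SpecialLinearGroup.coe_mul, Matrix.mul_apply, Fin.sum_univ_two]

lemma entry10 (A B : SL(2, R)) : (↑(A * B) : Matrix (Fin 2) (Fin 2) R) 1 0
    = A.1 1 0 * B.1 0 0 + A.1 1 1 * B.1 1 0 := by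
  simp [Matrix.SpecialLinearGroup.coe_mul, Matrix.mul_apply, Fin.sum_univ_two]

lemma entry11 (A B : SL(2, R)) : (↑(A * B) : Matrix (Fin 2) (Fin 2) R) 1 1
    = A.1 1 0 * B.1 0 1 + A.1 1 1 * B.1 1 1 := by
  simp [Matrix.SpecialLinearGroup.coe_mul, Matrix.mul_apply, Fin.sum_univ_two]

/-- The subgroup of upper triangular matrices in `SL₂(R)`. -/
def Bsub : Subgroup (Matrix.SpecialLinearGroup (Fin 2) R) where
  carrier := {A | A.1 1 0 = 0}
  one_mem' := by
    show ((1 : SL(2, R)) : Matrix (Fin 2) (Fin 2) R) 1 0 = 0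
    simp [Matrix.SpecialLinearGroup.coe_one, Matrix.one_apply]
  mul_mem' {A B} hA hB := by
    show (↑(A * B) : Matrix (Fin 2) (Fin 2) R) 1 0 = 0
    rw [entry10]
    simp only [Set.mem_setOf_eq] at hA hB
    rw [hA, hB]; ring
  inv_mem' {A} hA := by
    show (↑(A⁻¹) : Matrix (Fin 2) (Fin 2) R) 1 0 = 0
    rw [Matrix.SpecialLinearGroup.SL2_inv_expl A]
    simp only [Set.mem_setOf_eq] at hA
    simp [hA]

/-- The subgroup of matrices in `SL₂(R[t])` whose lower-left entry is divisible by `t`. -/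
def Psub : Subgroup (Matrix.SpecialLinearGroup (Fin 2) (Polynomial R)) where
  carrier := {A | (X : R[X]) ∣ A.1 1 0}
  one_mem' := by
    show (X : R[X]) ∣ ((1 : SL(2, R[X])) : Matrix (Fin 2) (Fin 2) R[X]) 1 0
    simp [Matrix.SpecialLinearGroup.coe_one, Matrix.one_apply]
  mul_mem' {A B} hA hB := by
    show (X : R[X]) ∣ (↑(A * B) : Matrix (Fin 2) (Fin 2) R[X]) 1 0
    rw [entry10]
    exact dvd_add (hA.mul_right _) (hB.mul_left _)
  inv_mem' {A} hA := by
    show (X : R[X]) ∣ (↑(A⁻¹) : Matrix (Fin 2) (Fin 2) R[X]) 1 0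
    rw [Matrix.SpecialLinearGroup.SL2_inv_expl A]
    simp only [Set.mem_setOf_eq] at hA
    simpa using hA.neg_right

/-- The elementary matrix `(1 r; 0 1)`. -/
def elUp (r : R) : SL(2, R) :=
  ⟨!![1, r; 0, 1], by simp [Matrix.det_fin_two_of]⟩

/-- The elementary matrix `(1 0; r 1)`. -/
def elLow (r : R) : SL(2, R) :=
  ⟨!![1, 0; r, 1], by simp [Matrix.det_fin_two_of]⟩

/-- The subgroup `E₂(R)` of `SL₂(R)` generated by the elementary matrices. -/
def Esub : Subgroup (Matrix.SpecialLinearGroup (Fin 2) R) :=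
  Subgroup.closure {A | (∃ r : R, A = elUp R r) ∨ (∃ r : R, A = elLow R r)}

variable {R}

lemma divX_X_mul (p : R[X]) : (X * p).divX = p := by
  ext n
  rw [Polynomial.coeff_divX, Polynomial.coeff_X_mul]

lemma X_mul_divX {p : R[X]} (h : (X : R[X]) ∣ p) : X * p.divX = p := by
  obtain ⟨c, rfl⟩ := h
  rw [divX_X_mul]

lemma X_mul_cancel {p q : R[X]} (h : X * p = X * q) : p = q := by
  ext n
  have := congrArg (fun r => Polynomial.coeff r (n + 1)) h
  simpa [Polynomial.coeff_X_mul] using this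

variable (R)

/-- The matrix underlying `conjP`. -/
noncomputable def conjMat (A : SL(2, R[X])) : Matrix (Fin 2) (Fin 2) R[X] :=
  !![A.1 0 0, X * A.1 0 1; (A.1 1 0).divX, A.1 1 1]

lemma conjMat_det {A : SL(2, R[X])} (hA : (X : R[X]) ∣ A.1 1 0) : (conjMat R A).det = 1 := by
  rw [conjMat, Matrix.det_fin_two_of]
  have h : X * (A.1 1 0).divX = A.1 1 0 := X_mul_divX hA
  have hd : A.1 0 0 * A.1 1 1 - A.1 0 1 * A.1 1 0 = 1 := by
    rw [← Matrix.det_fin_two]; exact A.2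
  calc A.1 0 0 * A.1 1 1 - X * A.1 0 1 * (A.1 1 0).divX
      = A.1 0 0 * A.1 1 1 - A.1 0 1 * (X * (A.1 1 0).divX) := by ring
    _ = 1 := by rw [h]; exact hd

lemma conjMat_mul {A B : SL(2, R[X])} (hA : (X : R[X]) ∣ A.1 1 0)
    (hB : (X : R[X]) ∣ B.1 1 0) :
    conjMat R (A * B) = conjMat R A * conjMat R B := by
  have h00 : A.1 0 0 * B.1 0 0 + A.1 0 1 * B.1 1 0
      = A.1 0 0 * B.1 0 0 + (X * A.1 0 1) * (B.1 1 0).divX := by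
    rw [show (X * A.1 0 1) * (B.1 1 0).divX = A.1 0 1 * (X * (B.1 1 0).divX) by ring,
      X_mul_divX hB]
  have h01 : X * (A.1 0 0 * B.1 0 1 + A.1 0 1 * B.1 1 1)
      = A.1 0 0 * (X * B.1 0 1) + (X * A.1 0 1) * B.1 1 1 := by ring
  have h10 : (A.1 1 0 * B.1 0 0 + A.1 1 1 * B.1 1 0).divX
      = (A.1 1 0).divX * B.1 0 0 + A.1 1 1 * (B.1 1 0).divX := by
    apply X_mul_cancel
    rw [X_mul_divX (dvd_add (hA.mul_right _) (hB.mul_left _))]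
    rw [mul_add,
      show X * ((A.1 1 0).divX * B.1 0 0) = (X * (A.1 1 0).divX) * B.1 0 0 by ring,
      X_mul_divX hA,
      show X * (A.1 1 1 * (B.1 1 0).divX) = A.1 1 1 * (X * (B.1 1 0).divX) by ring,
      X_mul_divX hB]
  have h11 : A.1 1 0 * B.1 0 1 + A.1 1 1 * B.1 1 1
      = (A.1 1 0).divX * (X * B.1 0 1) + A.1 1 1 * B.1 1 1 := by
    rw [show (A.1 1 0).divX * (X * B.1 0 1) = (X * (A.1 1 0).divX) * B.1 0 1 by ring,
      X_mul_divX hA]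
  rw [conjMat, conjMat, conjMat, entry00, entry01, entry10, entry11,
    Matrix.mul_fin_two, h10]
  rw [show (A.1 1 0 * B.1 0 1 + A.1 1 1 * B.1 1 1) = (A.1 1 0).divX * (X * B.1 0 1) + A.1 1 1 * B.1 1 1 from h11]
  rw [show (A.1 0 0 * B.1 0 0 + A.1 0 1 * B.1 1 0) = A.1 0 0 * B.1 0 0 + (X * A.1 0 1) * (B.1 1 0).divX from h00]
  rw [show X * (A.1 0 0 * B.1 0 1 + A.1 0 1 * B.1 1 1) = A.1 0 0 * (X * B.1 0 1) + (X * A.1 0 1) * B.1 1 1 from h01]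

/-- The second edge embedding `P → SL₂(R[t])`, conjugation by `diag(1,t)⁻¹` inside
`SL₂(R[t,t⁻¹])`: `(a, b; t·c, d) ↦ (a, t·b; c, d)`. -/
noncomputable def conjP : ↥(Psub R) →* SL(2, R[X]) where
  toFun A := ⟨conjMat R A.1, conjMat_det R A.2⟩
  map_one' := by
    apply Subtype.ext
    show conjMat R 1 = 1
    rw [conjMat]
    have h00 : ((1 : SL(2, R[X])) : Matrix (Fin 2) (Fin 2) R[X]) 0 0 = 1 := by
      rw [Matrix.SpecialLinearGroup.coe_one]; simp [Matrix.one_apply]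
    have h01 : ((1 : SL(2, R[X])) : Matrix (Fin 2) (Fin 2) R[X]) 0 1 = 0 := by
      rw [Matrix.SpecialLinearGroup.coe_one]; simp [Matrix.one_apply]
    have h10 : ((1 : SL(2, R[X])) : Matrix (Fin 2) (Fin 2) R[X]) 1 0 = 0 := by
      rw [Matrix.SpecialLinearGroup.coe_one]; simp [Matrix.one_apply]
    have h11 : ((1 : SL(2, R[X])) : Matrix (Fin 2) (Fin 2) R[X]) 1 1 = 1 := by
      rw [Matrix.SpecialLinearGroup.coe_one]; simp [Matrix.one_apply]
    rw [h00, h01, h10, h11, mul_zero, Polynomial.divX_zero, ← Matrix.one_fin_two]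
  map_mul' A B := by
    apply Subtype.ext
    show conjMat R (A.1 * B.1) = conjMat R A.1 * conjMat R B.1
    exact conjMat_mul R A.2 B.2

/-- The diagonal matrix `diag(1, t)` as a unit of the ring of 2×2 matrices over `R[t,t⁻¹]`. -/
noncomputable def DT : (Matrix (Fin 2) (Fin 2) (LaurentPolynomial R))ˣ where
  val := Matrix.diagonal ![1, LaurentPolynomial.T 1]
  inv := Matrix.diagonal ![1, LaurentPolynomial.T (-1)]
  val_inv := by
    rw [Matrix.diagonal_mul_diagonal]
    have : (fun i => (![1, LaurentPolynomial.T 1] : Fin 2 → LaurentPolynomial R) i *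
        ![1, LaurentPolynomial.T (-1)] i) = fun _ => (1 : LaurentPolynomial R) := by
      funext i
      fin_cases i
      · simp
      · show LaurentPolynomial.T 1 * LaurentPolynomial.T (-1) = 1
        rw [← LaurentPolynomial.T_add]; simp
    rw [this, Matrix.diagonal_one]
  inv_val := by
    rw [Matrix.diagonal_mul_diagonal]
    have : (fun i => (![1, LaurentPolynomial.T (-1)] : Fin 2 → LaurentPolynomial R) i *
        ![1, LaurentPolynomial.T 1] i) = fun _ => (1 : LaurentPolynomial R) := by
      funext i
      fin_cases i
      · simp
      · show LaurentPolynomial.T (-1) * LaurentPolynomial.T 1 = 1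
        rw [← LaurentPolynomial.T_add]; simp
    rw [this, Matrix.diagonal_one]

lemma DT_conj_det (M : Matrix (Fin 2) (Fin 2) (LaurentPolynomial R)) :
    (((DT R) : Matrix (Fin 2) (Fin 2) (LaurentPolynomial R)) * M * ((DT R)⁻¹).val).det = M.det := by
  rw [Matrix.det_mul, Matrix.det_mul]
  have h : ((DT R) : Matrix (Fin 2) (Fin 2) (LaurentPolynomial R)).det *
      ((DT R)⁻¹ : (Matrix (Fin 2) (Fin 2) (LaurentPolynomial R))ˣ).1.det = 1 := by
    rw [← Matrix.det_mul, Units.mul_inv, Matrix.det_one]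
  calc ((DT R) : Matrix (Fin 2) (Fin 2) (LaurentPolynomial R)).det * M.det * (((DT R)⁻¹).val).det
      = ((DT R) : Matrix (Fin 2) (Fin 2) (LaurentPolynomial R)).det * (((DT R)⁻¹).val).det * M.det := by ring
    _ = M.det := by rw [h, one_mul]

/-- The homomorphism `i₂ : SL₂(R[t]) → SL₂(R[t,t⁻¹])`, `A ↦ diag(1,t)·A·diag(1,t⁻¹)`. -/
noncomputable def i₂SL : SL(2, Polynomial R) →* SL(2, LaurentPolynomial R) where
  toFun A := ⟨(DT R : Matrix (Fin 2) (Fin 2) (LaurentPolynomial R)) *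
      A.1.map Polynomial.toLaurent * ↑(DT R)⁻¹, by
    rw [DT_conj_det]
    have : (A.1.map (Polynomial.toLaurent : R[X] → LaurentPolynomial R)).det
        = Polynomial.toLaurent A.1.det := by
      rw [← RingHom.mapMatrix_apply, ← RingHom.map_det]
    rw [this, A.2, _root_.map_one]⟩
  map_one' := by
    apply Subtype.ext
    show (DT R : Matrix (Fin 2) (Fin 2) (LaurentPolynomial R)) *
      ((1 : SL(2, R[X])).1.map Polynomial.toLaurent) * (↑(DT R)⁻¹ : Matrix (Fin 2) (Fin 2) (LaurentPolynomial R)) = 1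
    rw [Matrix.SpecialLinearGroup.coe_one]
    rw [show ((1 : Matrix (Fin 2) (Fin 2) R[X]).map (Polynomial.toLaurent : R[X] → _)) = 1 from
      Matrix.map_one _ (map_zero _) (map_one _)]
    rw [mul_one, Units.mul_inv]
  map_mul' A B := by
    apply Subtype.ext
    show (DT R : Matrix (Fin 2) (Fin 2) (LaurentPolynomial R)) *
        ((A * B).1.map Polynomial.toLaurent) * (↑(DT R)⁻¹ : Matrix (Fin 2) (Fin 2) (LaurentPolynomial R)) = _
    rw [Matrix.SpecialLinearGroup.coe_mul]
    rw [show ((A.1 * B.1).map (Polynomial.toLaurent : R[X] → _))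
        = A.1.map Polynomial.toLaurent * B.1.map Polynomial.toLaurent from
      Matrix.map_mul]
    show _ = ((DT R : Matrix (Fin 2) (Fin 2) (LaurentPolynomial R)) *
        A.1.map Polynomial.toLaurent * (↑(DT R)⁻¹ : Matrix (Fin 2) (Fin 2) (LaurentPolynomial R))) *
      ((DT R : Matrix (Fin 2) (Fin 2) (LaurentPolynomial R)) *
        B.1.map Polynomial.toLaurent * (↑(DT R)⁻¹ : Matrix (Fin 2) (Fin 2) (LaurentPolynomial R)))
    simp only [mul_assoc, Units.inv_mul_cancel_left]

end Paper

namespace Paper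

/-- The inclusion `SL₂(ℚ[t]) → SL₂(ℚ[t,t⁻¹])`. -/
noncomputable def jQ : SL(2, Polynomial ℚ) →* SL(2, LaurentPolynomial ℚ) :=
  Matrix.SpecialLinearGroup.map (Polynomial.toLaurent : Polynomial ℚ →+* LaurentPolynomial ℚ)

/-- The inclusion `SL₂(ℤ[t]) → SL₂(ℚ[t])`. -/
noncomputable def ZXtoQX : SL(2, Polynomial ℤ) →* SL(2, Polynomial ℚ) :=
  Matrix.SpecialLinearGroup.map (Polynomial.mapRingHom (Int.castRingHom ℚ))

/-- The inclusion `SL₂(ℤ[t]) → SL₂(ℚ[t,t⁻¹])`. -/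
noncomputable def jZ : SL(2, Polynomial ℤ) →* SL(2, LaurentPolynomial ℚ) :=
  jQ.comp ZXtoQX

end Paper


namespace Paper

lemma jQ_coe (B : SL(2, Polynomial ℚ)) (i j : Fin 2) :
    (jQ B).1 i j = Polynomial.toLaurent (B.1 i j) := rfl

lemma jZ_coe (A : SL(2, Polynomial ℤ)) (i j : Fin 2) :
    (jZ A).1 i j = Polynomial.toLaurent ((A.1 i j).map (Int.castRingHom ℚ)) := rfl

lemma jQ_injective : Function.Injective jQ := by
  intro A B h
  apply Subtype.ext
  refine Matrix.ext fun i j => ?_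
  have := congrArg (fun M => (M : SL(2, LaurentPolynomial ℚ)).1 i j) h
  exact Polynomial.toLaurent_injective this

lemma T_cancel (x : LaurentPolynomial ℚ) :
    T 1 * x * T (-1) = x := by
  rw [mul_comm (T 1) x, mul_assoc, ← T_add]
  norm_num

lemma i₂SL_coe (A : SL(2, Polynomial ℚ)) :
    ((i₂SL ℚ A) : Matrix (Fin 2) (Fin 2) (LaurentPolynomial ℚ)) =
      !![Polynomial.toLaurent (A.1 0 0), Polynomial.toLaurent (A.1 0 1) * T (-1);
         T 1 * Polynomial.toLaurent (A.1 1 0), Polynomial.toLaurent (A.1 1 1)] := by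
  show (DT ℚ).val * A.1.map Polynomial.toLaurent * ((DT ℚ)⁻¹).val = _
  show Matrix.diagonal ![1, T 1] * A.1.map Polynomial.toLaurent
      * Matrix.diagonal ![1, T (-1)] = _
  refine Matrix.ext fun i j => ?_
  fin_cases i <;> fin_cases j <;>
    simp [Matrix.mul_apply, Fin.sum_univ_two, Matrix.diagonal]

lemma X_dvd_of_map {p : Polynomial ℤ} (h : (X : ℚ[X]) ∣ p.map (Int.castRingHom ℚ)) :
    (X : ℤ[X]) ∣ p := by
  rw [Polynomial.X_dvd_iff] at h ⊢
  rw [Polynomial.coeff_map] at h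
  have h2 : ((p.coeff 0 : ℤ) : ℚ) = 0 := h
  exact_mod_cast h2

lemma key1 (A : SL(2, Polynomial ℤ)) (hA : (X : ℤ[X]) ∣ A.1 1 0) :
    i₂SL ℚ (ZXtoQX (conjP ℤ ⟨A, hA⟩)) = jZ A := by
  apply Subtype.ext
  rw [i₂SL_coe]
  have hc : (ZXtoQX (conjP ℤ ⟨A, hA⟩)).1
      = (conjMat ℤ A).map (Polynomial.map (Int.castRingHom ℚ)) := rfl
  have e01 : Polynomial.toLaurent ((X * A.1 0 1).map (Int.castRingHom ℚ)) * T (-1)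
      = Polynomial.toLaurent ((A.1 0 1).map (Int.castRingHom ℚ)) := by
    rw [Polynomial.map_mul, Polynomial.map_X, _root_.map_mul, Polynomial.toLaurent_X,
      T_cancel]
  have e10 : T 1 * Polynomial.toLaurent (((A.1 1 0).divX).map (Int.castRingHom ℚ))
      = Polynomial.toLaurent ((A.1 1 0).map (Int.castRingHom ℚ)) := by
    conv_rhs => rw [← X_mul_divX hA]
    rw [Polynomial.map_mul, Polynomial.map_X, _root_.map_mul, Polynomial.toLaurent_X]
  refine Matrix.ext fun i j => ?_
  rw [jZ_coe, hc]
  fin_cases i <;> fin_cases j <;>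
    simp only [conjMat, Matrix.map_apply, Matrix.cons_val', Matrix.cons_val_zero,
      Matrix.cons_val_one, Matrix.head_cons, Matrix.head_fin_const, Matrix.empty_val',
      Matrix.cons_val_fin_one, Matrix.of_apply, Fin.isValue, Fin.zero_eta, Fin.mk_one] <;>
    first
      | rfl
      | exact e01
      | exact e10

lemma key2 (A' : SL(2, Polynomial ℤ)) (hb : (X : ℤ[X]) ∣ A'.1 0 1) :
    ∃ A : SL(2, Polynomial ℤ), (X : ℤ[X]) ∣ A.1 1 0 ∧ jZ A = i₂SL ℚ (ZXtoQX A') := by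
  have hdet : A'.1 0 0 * A'.1 1 1 - A'.1 0 1 * A'.1 1 0 = 1 := by
    rw [← Matrix.det_fin_two]; exact A'.2
  refine ⟨⟨!![A'.1 0 0, (A'.1 0 1).divX; X * A'.1 1 0, A'.1 1 1], ?_⟩, ?_, ?_⟩
  · rw [Matrix.det_fin_two_of]
    calc A'.1 0 0 * A'.1 1 1 - (A'.1 0 1).divX * (X * A'.1 1 0)
        = A'.1 0 0 * A'.1 1 1 - (X * (A'.1 0 1).divX) * A'.1 1 0 := by ring
      _ = 1 := by rw [X_mul_divX hb]; exact hdet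
  · show (X : ℤ[X]) ∣ !![A'.1 0 0, (A'.1 0 1).divX; X * A'.1 1 0, A'.1 1 1] 1 0
    simp
  · apply Subtype.ext
    rw [i₂SL_coe]
    have e01 : Polynomial.toLaurent (((A'.1 0 1).divX).map (Int.castRingHom ℚ))
        = Polynomial.toLaurent ((A'.1 0 1).map (Int.castRingHom ℚ)) * T (-1) := by
      conv_rhs => rw [← X_mul_divX hb]
      rw [Polynomial.map_mul, Polynomial.map_X, _root_.map_mul, Polynomial.toLaurent_X,
        T_cancel]
    have e10 : Polynomial.toLaurent ((X * A'.1 1 0).map (Int.castRingHom ℚ))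
        = T 1 * Polynomial.toLaurent ((A'.1 1 0).map (Int.castRingHom ℚ)) := by
      rw [Polynomial.map_mul, Polynomial.map_X, _root_.map_mul, Polynomial.toLaurent_X]
    have hc : ∀ i j, ((ZXtoQX A') : Matrix (Fin 2) (Fin 2) ℚ[X]) i j
        = (A'.1 i j).map (Int.castRingHom ℚ) := fun i j => rfl
    refine Matrix.ext fun i j => ?_
    refine (jZ_coe _ i j).trans ?_
    fin_cases i <;> fin_cases j <;>
      simp only [hc, Matrix.cons_val', Matrix.cons_val_zero, Matrix.cons_val_one,
        Matrix.head_cons, Matrix.head_fin_const, Matrix.empty_val',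
        Matrix.cons_val_fin_one, Matrix.of_apply, Fin.isValue, Fin.zero_eta, Fin.mk_one] <;>
      first
        | rfl
        | exact e01
        | exact e10
  -- done

end Paper

open Paper in
/-- Inside `SL₂(ℚ[t,t⁻¹])`, one has `SL₂(ℤ[t]) ∩ Γ(ℚ) = i₂(SL₂(ℤ[t])) ∩ Γ(ℚ)`, and this common
subgroup is the image of `P`, the subgroup of matrices of `SL₂(ℤ[t])` whose lower-left entry is
divisible by `t`. -/
theorem intersection_SL2Zt_Gamma :
    (jZ.range ⊓ (Psub ℚ).map jQ
        = ((i₂SL ℚ).comp ZXtoQX).range ⊓ (Psub ℚ).map jQ)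
    ∧ jZ.range ⊓ (Psub ℚ).map jQ = (Psub ℤ).map jZ := by
  have h2 : jZ.range ⊓ (Psub ℚ).map jQ = (Psub ℤ).map jZ := by
    ext M
    constructor
    · rintro ⟨⟨A, rfl⟩, B, hB, hBM⟩
      have hAB : B = ZXtoQX A := jQ_injective hBM
      have hB' : (X : ℚ[X]) ∣ B.1 1 0 := hB
      rw [hAB] at hB'
      have hA : (X : ℤ[X]) ∣ A.1 1 0 := X_dvd_of_map hB'
      exact ⟨A, hA, rfl⟩
    · rintro ⟨A, hA, rfl⟩
      refine ⟨⟨A, rfl⟩, ZXtoQX A, ?_, rfl⟩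
      show (X : ℚ[X]) ∣ ((A.1 1 0).map (Int.castRingHom ℚ))
      obtain ⟨c, hc⟩ := hA
      exact ⟨c.map (Int.castRingHom ℚ), by rw [hc, Polynomial.map_mul, Polynomial.map_X]⟩
  refine ⟨?_, h2⟩
  ext M
  constructor
  · intro hM
    have hM2 : M ∈ (Psub ℤ).map jZ := by rw [← h2]; exact hM
    obtain ⟨A, hA, rfl⟩ := hM2
    refine ⟨⟨conjP ℤ ⟨A, hA⟩, key1 A hA⟩, ZXtoQX A, ?_, rfl⟩
    show (X : ℚ[X]) ∣ ((A.1 1 0).map (Int.castRingHom ℚ))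
    obtain ⟨c, hcc⟩ := hA
    exact ⟨c.map (Int.castRingHom ℚ), by rw [hcc, Polynomial.map_mul, Polynomial.map_X]⟩
  · rintro ⟨⟨A', rfl⟩, B, hB, hBM⟩
    have he := congrArg (fun M => (M : SL(2, LaurentPolynomial ℚ)).1 0 1) hBM
    simp only [MonoidHom.comp_apply] at he
    rw [jQ_coe, i₂SL_coe] at he
    simp only [Matrix.cons_val', Matrix.cons_val_zero, Matrix.cons_val_one, Matrix.head_cons,
      Matrix.empty_val', Matrix.cons_val_fin_one, Matrix.of_apply, Fin.isValue] at he
    have he2 : Polynomial.toLaurent ((X : ℚ[X]) * B.1 0 1)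
        = Polynomial.toLaurent ((A'.1 0 1).map (Int.castRingHom ℚ)) := by
      rw [_root_.map_mul, Polynomial.toLaurent_X, he, ← mul_assoc, T_cancel]
      rfl
    have hmap : (A'.1 0 1).map (Int.castRingHom ℚ) = (X : ℚ[X]) * B.1 0 1 :=
      Polynomial.toLaurent_injective he2.symm
    have hb : (X : ℤ[X]) ∣ A'.1 0 1 := X_dvd_of_map ⟨B.1 0 1, hmap⟩
    obtain ⟨A, hA, hAeq⟩ := key2 A' hb
    exact ⟨⟨A, hAeq⟩, B, hB, hBM⟩
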